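/- Let Γ be a finite simple graph, Γ₁ ⊆ Γ an induced subgraph, and g ∈ W_Γ. Then there exist an induced subgraph Γ₂ ⊆ Γ₁ and an element h ∈ W_{Γ₁} such that W_{Γ₁} ∩ g W_{Γ₁} g⁻¹ = h W_{Γ₂} h⁻¹. -/

import Mathlib

def racgRels {V : Type*} (G : SimpleGraph V) : Set (FreeGroup V) :=
  {r | (∃ v, r = FreeGroup.of v * FreeGroup.of v) ∨
    ∃ u v, G.Adj u v ∧ r = FreeGroup.of u * FreeGroup.of v * FreeGroup.of u * FreeGroup.of v}

abbrev RACG {V : Type*} (G : SimpleGraph V) : Type _ := PresentedGroup (racgRels G)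

def racgGen {V : Type*} (G : SimpleGraph V) (v : V) : RACG G := PresentedGroup.of v

def specialSubgroup {V : Type*} (G : SimpleGraph V) (S : Set V) : Subgroup (RACG G) :=
  Subgroup.closure (racgGen G '' S)

def linkSet {V : Type*} (G : SimpleGraph V) (S : Set V) : Set V :=
  {u | ∀ s ∈ S, G.Adj u s}

noncomputable def wordLength {V : Type*} (G : SimpleGraph V) (g : RACG G) : ℕ :=
  sInf {n | ∃ l : List V, l.length = n ∧ (l.map (racgGen G)).prod = g}

lemma racgGen_sq {V : Type*} (G : SimpleGraph V) (v : V) :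
    racgGen G v * racgGen G v = 1 := by
  have h : (QuotientGroup.mk (FreeGroup.of v * FreeGroup.of v) :
      PresentedGroup (racgRels G)) = 1 := by
    rw [QuotientGroup.eq_one_iff]
    exact Subgroup.subset_normalClosure (Or.inl ⟨v, rfl⟩)
  first
  | exact h
  | (simp only [racgGen, PresentedGroup.of, ← map_mul]; exact h)

lemma racgGen_comm {V : Type*} (G : SimpleGraph V) {u v : V} (h : G.Adj u v) :
    racgGen G u * racgGen G v * racgGen G u * racgGen G v = 1 := by
  have h' : (QuotientGroup.mk (FreeGroup.of u * FreeGroup.of v * FreeGroup.of u * FreeGroup.of v) :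
      PresentedGroup (racgRels G)) = 1 := by
    rw [QuotientGroup.eq_one_iff]
    exact Subgroup.subset_normalClosure (Or.inr ⟨u, v, h, rfl⟩)
  first
  | exact h'
  | (simp only [racgGen, PresentedGroup.of, ← map_mul]; exact h')

lemma racg_induce_lift {V : Type*} (G : SimpleGraph V) {S : Set V} {H : Type*} [Group H]
    (f : S → H) (hsq : ∀ v : S, f v * f v = 1)
    (hcomm : ∀ u v : S, G.Adj ↑u ↑v → f u * f v * f u * f v = 1) :
    ∀ r ∈ racgRels (G.induce S), FreeGroup.lift f r = 1 := by
  rintro r (⟨v, rfl⟩ | ⟨u, v, hadj, rfl⟩)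
  · simpa [map_mul] using hsq v
  · have h' : G.Adj ↑u ↑v := hadj
    simpa [map_mul] using hcomm u v h'

/-- The canonical homomorphism between special subgroups induced by an inclusion of
vertex sets. -/
def racgMapHom {V : Type*} (G : SimpleGraph V) {S T : Set V} (h : S ⊆ T) :
    RACG (G.induce S) →* RACG (G.induce T) :=
  PresentedGroup.toGroup (f := fun v : S => racgGen (G.induce T) ⟨v.1, h v.2⟩)
    (racg_induce_lift G _
      (fun v => racgGen_sq _ _)
      (fun u v hadj => racgGen_comm (G.induce T) (by exact hadj)))

/-- The canonical homomorphism from the special subgroup on `S` to the full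
right-angled Coxeter group. -/
def racgInclHom {V : Type*} (G : SimpleGraph V) (S : Set V) :
    RACG (G.induce S) →* RACG G :=
  PresentedGroup.toGroup (f := fun v : S => racgGen G ↑v)
    (racg_induce_lift G _
      (fun v => racgGen_sq _ _)
      (fun u v hadj => racgGen_comm G hadj))

section ChunkA

namespace RACGI

open CoxeterSystem List

variable {V : Type*} (G : SimpleGraph V)

open Classical in
/-- The Coxeter matrix of a right-angled Coxeter group. -/
noncomputable def cmat : CoxeterMatrix V where
  M := Matrix.of fun u v => if u = v then 1 else if G.Adj u v then 2 else 0
  isSymm := by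
    ext u v
    simp only [Matrix.transpose_apply, Matrix.of_apply]
    by_cases h : u = v
    · simp [h]
    · simp [h, Ne.symm h, G.adj_comm]
  diagonal i := by simp [Matrix.of_apply]
  off_diagonal i j h := by
    simp only [Matrix.of_apply, if_neg h]
    split <;> simp

lemma cmat_diag (v : V) : cmat G v v = 1 := (cmat G).diagonal v

lemma cmat_adj {u v : V} (h : G.Adj u v) : cmat G u v = 2 := by
  have hne : u ≠ v := G.ne_of_adj h
  simp [cmat, Matrix.of_apply, hne, h]

lemma cmat_nadj {u v : V} (hne : u ≠ v) (h : ¬ G.Adj u v) : cmat G u v = 0 := by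
  simp [cmat, Matrix.of_apply, hne, h]

/-- From `RACG G` to the Coxeter group of the matrix. -/
noncomputable def toCox : RACG G →* (cmat G).Group :=
  PresentedGroup.toGroup (f := fun v => (cmat G).simple v) (by
    rintro r (⟨v, rfl⟩ | ⟨u, v, hadj, rfl⟩)
    · have := (cmat G).toCoxeterSystem.simple_mul_simple_pow v v
      rw [CoxeterMatrix.toCoxeterSystem_simple, cmat_diag, pow_one] at this
      simpa [map_mul] using this
    · have := (cmat G).toCoxeterSystem.simple_mul_simple_pow u v
      rw [CoxeterMatrix.toCoxeterSystem_simple, cmat_adj G hadj, pow_two, ← mul_assoc] at this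
      simpa [map_mul, mul_assoc] using this)

/-- From the Coxeter group of the matrix to `RACG G`. -/
noncomputable def ofCox : (cmat G).Group →* RACG G :=
  PresentedGroup.toGroup (f := fun v => racgGen G v) (by
    rintro r ⟨⟨u, v⟩, rfl⟩
    show FreeGroup.lift _ ((FreeGroup.of u * FreeGroup.of v) ^ cmat G u v) = 1
    rw [map_pow, map_mul, FreeGroup.lift_apply_of, FreeGroup.lift_apply_of]
    by_cases huv : u = v
    · subst huv
      rw [cmat_diag, pow_one]
      exact racgGen_sq G u
    · by_cases hadj : G.Adj u v
      · rw [cmat_adj G hadj, pow_two, ← mul_assoc]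
        exact racgGen_comm G hadj
      · rw [cmat_nadj G huv hadj, pow_zero])

lemma toCox_of (x : V) : toCox G (PresentedGroup.of x) = PresentedGroup.of x :=
  PresentedGroup.toGroup.of _

lemma ofCox_of (x : V) : ofCox G (PresentedGroup.of x) = racgGen G x :=
  PresentedGroup.toGroup.of _

lemma ofCox_comp_toCox : (ofCox G).comp (toCox G) = MonoidHom.id _ :=
  PresentedGroup.ext fun x => by
    exact (congrArg (ofCox G) (toCox_of G x)).trans (ofCox_of G x)

lemma toCox_comp_ofCox : (toCox G).comp (ofCox G) = MonoidHom.id _ :=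
  PresentedGroup.ext fun x => by
    have h1 : ofCox G (PresentedGroup.of x) = racgGen G x := ofCox_of G x
    have h2 : toCox G (PresentedGroup.of x) = PresentedGroup.of x := toCox_of G x
    exact (congrArg (toCox G) h1).trans h2

/-- The Coxeter system on `RACG G`. -/
noncomputable def racgCS : CoxeterSystem (cmat G) (RACG G) :=
  ⟨MonoidHom.toMulEquiv (toCox G) (ofCox G) (ofCox_comp_toCox G) (toCox_comp_ofCox G)⟩

@[simp] lemma racgCS_simple (v : V) : (racgCS G).simple v = racgGen G v :=
  ofCox_of G v

end RACGI

end ChunkA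
section ChunkB

namespace RACGI

open CoxeterSystem List

variable {V : Type*} (G : SimpleGraph V)

local prefix:100 "σ" => racgGen G

lemma racgGen_inv (v : V) : (σ v)⁻¹ = σ v :=
  inv_eq_of_mul_eq_one_right (racgGen_sq G v)

lemma sandwich {a : RACG G} (haa : a * a = 1) (t : RACG G) :
    a * (a * t * a) * a = t := by
  calc a * (a * t * a) * a = (a * a) * t * (a * a) := by group
  _ = t := by rw [haa]; group

lemma conj_eq_iff {a : RACG G} (haa : a * a = 1) (t c : RACG G) :
    a * t * a = c ↔ t = a * c * a := by
  constructor
  · intro h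
    rw [← h]
    exact (sandwich G haa t).symm
  · intro h
    rw [h]
    exact sandwich G haa c

lemma conj_eq_iff' (w t c : RACG G) : w * t * w⁻¹ = c ↔ t = w⁻¹ * c * w := by
  constructor
  · intro h; rw [← h]; group
  · intro h; rw [h]; group

open Classical in
/-- The building block of the permutation representation. -/
noncomputable def etaFun (v : V) : RACG G × ZMod 2 → RACG G × ZMod 2 :=
  fun p => (σ v * p.1 * σ v, p.2 + if p.1 = σ v then 1 else 0)

open Classical in
lemma etaFun_apply (v : V) (t : RACG G) (z : ZMod 2) :
    etaFun G v (t, z) = (σ v * t * σ v, z + if t = σ v then 1 else 0) := rfl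

lemma sandwich_self (v : V) (t : RACG G) : σ v * (σ v * t * σ v) * σ v = t :=
  sandwich G (racgGen_sq G v) t

lemma triple_self (v : V) : σ v * σ v * σ v = σ v := by
  rw [racgGen_sq, one_mul]

lemma conj_self_iff (v : V) (t : RACG G) : σ v * t * σ v = σ v ↔ t = σ v := by
  rw [conj_eq_iff G (racgGen_sq G v), triple_self]

lemma etaFun_involutive (v : V) : Function.Involutive (etaFun G v) := by
  classical
  intro ⟨t, z⟩
  rw [etaFun_apply, etaFun_apply, sandwich_self]
  refine Prod.ext rfl ?_
  simp only [conj_self_iff]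
  by_cases ht : t = σ v
  · simp only [ht, if_pos rfl]
    revert z; decide
  · simp [ht]

/-- The building block of the permutation representation. -/
noncomputable def eta (v : V) : Equiv.Perm (RACG G × ZMod 2) :=
  Function.Involutive.toPerm _ (etaFun_involutive G v)

open Classical in
lemma eta_apply (v : V) (t : RACG G) (z : ZMod 2) :
    eta G v (t, z) = (σ v * t * σ v, z + if t = σ v then 1 else 0) := rfl

lemma eta_liftable : CoxeterMatrix.IsLiftable (cmat G) (eta G) := by
  classical
  intro i j
  by_cases hij : i = j
  · subst hij
    rw [cmat_diag, pow_one]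
    apply Equiv.ext
    intro p
    rw [Equiv.Perm.mul_apply]
    exact (etaFun_involutive G i p).trans (Equiv.Perm.one_apply p).symm
  · by_cases hadj : G.Adj i j
    · rw [cmat_adj G hadj]
      have hsi := racgGen_sq G i
      have hsj := racgGen_sq G j
      have habab : σ i * σ j * σ i * σ j = 1 := racgGen_comm G hadj
      have haba : σ i * σ j * σ i = σ j := by
        have h := congrArg (· * σ j) habab
        simp only [one_mul] at h
        calc σ i * σ j * σ i = σ i * σ j * σ i * (σ j * σ j) := by rw [hsj]; group
        _ = (σ i * σ j * σ i * σ j) * σ j := by group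
        _ = σ j := by rw [habab]; group
      have hcomm : σ j * σ i = σ i * σ j := by
        calc σ j * σ i = (σ i * σ i) * (σ j * σ i) := by rw [hsi]; group
        _ = σ i * (σ i * σ j * σ i) := by group
        _ = σ i * σ j := by rw [haba]
      have hbab : σ j * σ i * σ j = σ i := by
        calc σ j * σ i * σ j = σ i * σ j * σ j := by rw [hcomm]
        _ = σ i * (σ j * σ j) := by group
        _ = σ i := by rw [hsj]; group
      have c3iff : ∀ t : RACG G, (σ i * (σ j * t * σ j) * σ i = σ j) ↔ (t = σ j) := by
        intro t
        rw [conj_eq_iff G hsi, haba, conj_self_iff]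
      have c4iff : ∀ t : RACG G,
          (σ j * (σ i * (σ j * t * σ j) * σ i) * σ j = σ i) ↔ (σ j * t * σ j = σ i) := by
        intro t
        rw [conj_eq_iff G hsj, hbab, conj_eq_iff G hsi, triple_self, conj_eq_iff G hsj]
      have hbaba : σ j * σ i * σ j * σ i = 1 := by
        calc σ j * σ i * σ j * σ i = (σ j * σ i) * (σ j * σ i) := by group
        _ = (σ i * σ j) * (σ i * σ j) := by rw [hcomm]
        _ = σ i * σ j * σ i * σ j := by group
        _ = 1 := habab
      have hfirst : ∀ t : RACG G,
          σ i * (σ j * (σ i * (σ j * t * σ j) * σ i) * σ j) * σ i = t := by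
        intro t
        calc σ i * (σ j * (σ i * (σ j * t * σ j) * σ i) * σ j) * σ i
            = (σ i * σ j * σ i * σ j) * t * (σ j * σ i * σ j * σ i) := by group
        _ = t := by rw [habab, hbaba]; group
      rw [pow_two]
      apply Equiv.ext
      intro ⟨t, z⟩
      simp only [Equiv.Perm.mul_apply, Equiv.Perm.one_apply, eta_apply]
      refine Prod.ext ?_ ?_
      · exact hfirst t
      · simp only [c3iff, c4iff, conj_self_iff]
        by_cases h1 : t = σ j
        · by_cases h2 : σ j * t * σ j = σ i
          · simp only [if_pos h1, if_pos h2]; revert z; decide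
          · simp only [if_pos h1, if_neg h2]; revert z; decide
        · by_cases h2 : σ j * t * σ j = σ i
          · simp only [if_pos h2, if_neg h1]; revert z; decide
          · simp only [if_neg h1, if_neg h2]; revert z; decide
    · rw [cmat_nadj G hij hadj, pow_zero]

/-- The permutation representation on `W × ZMod 2`. -/
noncomputable def phi : RACG G →* Equiv.Perm (RACG G × ZMod 2) :=
  (racgCS G).lift ⟨eta G, eta_liftable G⟩

lemma phi_simple (v : V) : phi G (racgGen G v) = eta G v := by
  have := (racgCS G).lift_apply_simple (eta_liftable G) v
  rwa [racgCS_simple] at this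

end RACGI

end ChunkB
section ChunkC

namespace RACGI

open CoxeterSystem List

variable {V : Type*} (G : SimpleGraph V)

local prefix:100 "σ" => racgGen G
local prefix:100 "π" => CoxeterSystem.wordProd (racgCS G)
local prefix:100 "ℓ" => CoxeterSystem.length (racgCS G)

open Classical in
lemma phi_wordProd (ω : List V) (t : RACG G) (z : ZMod 2) :
    phi G (π ω) (t, z) =
      (π ω * t * (π ω)⁻¹, z + (((racgCS G).rightInvSeq ω).count t : ZMod 2)) := by
  induction ω generalizing z with
  | nil => simp [Equiv.Perm.one_apply]
  | cons i ω ih =>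
    rw [wordProd_cons, racgCS_simple, map_mul, Equiv.Perm.mul_apply, ih, phi_simple, eta_apply]
    have hris : (racgCS G).rightInvSeq (i :: ω)
        = ((π ω)⁻¹ * σ i * (π ω)) :: (racgCS G).rightInvSeq ω := by
      rw [← racgCS_simple]
      rfl
    refine Prod.ext ?_ ?_
    · show σ i * (π ω * t * (π ω)⁻¹) * σ i = (σ i * π ω) * t * (σ i * π ω)⁻¹
      rw [mul_inv_rev, racgGen_inv]
      group
    · show (z + _) + _ = z + _
      rw [hris, List.count_cons]
      simp only [beq_iff_eq]
      have hiff : (π ω * t * (π ω)⁻¹ = σ i) ↔ ((π ω)⁻¹ * σ i * (π ω) = t) := by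
        rw [conj_eq_iff' G (π ω) t (σ i), eq_comm]
      push_cast
      rw [add_assoc]
      congr 1
      by_cases h : (π ω)⁻¹ * σ i * (π ω) = t
      · rw [if_pos (hiff.mpr h), if_pos (by exact h)]
      · rw [if_neg (fun hc => h (hiff.mp hc)), if_neg (by exact h)]

open Classical in
lemma ris_count_parity {ω ω' : List V} (h : π ω = π ω') (t : RACG G) :
    ((((racgCS G).rightInvSeq ω).count t : ZMod 2))
      = (((racgCS G).rightInvSeq ω').count t : ZMod 2) := by
  have h1 := phi_wordProd G ω t 0
  have h2 := phi_wordProd G ω' t 0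
  rw [h] at h1
  rw [h1] at h2
  have := congrArg Prod.snd h2
  simpa using this

open Classical in
lemma mem_ris_of_rightDescent {ω : List V} {w : RACG G} {i : V}
    (hred : (racgCS G).IsReduced ω) (hw : π ω = w)
    (hd : ℓ (w * σ i) < ℓ w) : σ i ∈ (racgCS G).rightInvSeq ω := by
  obtain ⟨β, hβred, hβ⟩ := (racgCS G).exists_reduced_word' (w * σ i)
  have hω' : π (β ++ [i]) = w := by
    rw [wordProd_append, ← hβ, wordProd_singleton, racgCS_simple, mul_assoc,
      racgGen_sq, mul_one]
  have hcount' : ((racgCS G).rightInvSeq (β ++ [i])).count (σ i)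
      = ((racgCS G).rightInvSeq β).count (σ i) + 1 := by
    rw [← List.concat_eq_append, (racgCS G).rightInvSeq_concat]
    rw [List.concat_eq_append, List.count_append]
    congr 1
    · have hinj : Function.Injective (⇑(MulAut.conj ((racgCS G).simple i))) :=
        (MulAut.conj ((racgCS G).simple i)).injective
      have hfix : (MulAut.conj ((racgCS G).simple i)) (σ i) = σ i := by
        rw [racgCS_simple, MulAut.conj_apply, racgGen_inv, mul_assoc, racgGen_sq, mul_one]
      calc (List.map (⇑(MulAut.conj ((racgCS G).simple i))) ((racgCS G).rightInvSeq β)).count (σ i)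
          = (List.map (⇑(MulAut.conj ((racgCS G).simple i))) ((racgCS G).rightInvSeq β)).count
              ((MulAut.conj ((racgCS G).simple i)) (σ i)) := by rw [hfix]
        _ = ((racgCS G).rightInvSeq β).count (σ i) :=
            List.count_map_of_injective _ _ hinj _
    · simp [racgCS_simple]
  have hnotmem : σ i ∉ (racgCS G).rightInvSeq β := by
    intro hmem
    have := (racgCS G).isRightInversion_of_mem_rightInvSeq hβred hmem
    rw [← hβ] at this
    have hlt := this.2
    rw [mul_assoc, racgGen_sq, mul_one] at hlt
    omega
  have hc0 : ((racgCS G).rightInvSeq β).count (σ i) = 0 := by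
    exact List.count_eq_zero.mpr hnotmem
  have hpar := ris_count_parity G (ω' := β ++ [i]) (by rw [hw, hω']) (σ i)
  rw [hcount', hc0] at hpar
  by_contra hmem
  rw [List.count_eq_zero.mpr hmem] at hpar
  simp at hpar

lemma right_exchange {ω : List V} {w : RACG G} {i : V}
    (hred : (racgCS G).IsReduced ω) (hw : π ω = w)
    (hd : ℓ (w * σ i) < ℓ w) :
    ∃ j < ω.length, π (ω.eraseIdx j) = w * σ i := by
  have hmem := mem_ris_of_rightDescent G hred hw hd
  obtain ⟨j, hj, hje⟩ := List.mem_iff_getElem.mp hmem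
  rw [(racgCS G).length_rightInvSeq] at hj
  refine ⟨j, hj, ?_⟩
  have := (racgCS G).wordProd_mul_getD_rightInvSeq ω j
  rw [List.getD_eq_getElem _ _ (by rw [(racgCS G).length_rightInvSeq]; exact hj)] at this
  rw [← this, hje, hw]

lemma left_exchange {ω : List V} {w : RACG G} {i : V}
    (hred : (racgCS G).IsReduced ω) (hw : π ω = w)
    (hd : ℓ (σ i * w) < ℓ w) :
    ∃ j < ω.length, π (ω.eraseIdx j) = σ i * w := by
  have hmem : σ i ∈ (racgCS G).leftInvSeq ω := by
    have hrev : (racgCS G).IsReduced ω.reverse := ((racgCS G).isReduced_reverse_iff ω).mpr hred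
    have hwrev : π ω.reverse = w⁻¹ := by rw [wordProd_reverse, hw]
    have hdrev : ℓ (w⁻¹ * σ i) < ℓ w⁻¹ := by
      have h1 : ℓ (w⁻¹ * σ i) = ℓ (σ i * w) := by
        rw [← (racgCS G).length_inv (w⁻¹ * σ i)]
        rw [mul_inv_rev, racgGen_inv, inv_inv]
      rw [h1, (racgCS G).length_inv]
      exact hd
    have := mem_ris_of_rightDescent G hrev hwrev hdrev
    rw [(racgCS G).rightInvSeq_reverse] at this
    exact List.mem_reverse.mp this
  obtain ⟨j, hj, hje⟩ := List.mem_iff_getElem.mp hmem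
  rw [(racgCS G).length_leftInvSeq] at hj
  refine ⟨j, hj, ?_⟩
  have := (racgCS G).getD_leftInvSeq_mul_wordProd ω j
  rw [List.getD_eq_getElem _ _ (by rw [(racgCS G).length_leftInvSeq]; exact hj)] at this
  rw [← this, hje, hw]

end RACGI

end ChunkC
section ChunkD

namespace RACGI

open CoxeterSystem List

variable {V : Type*} (G : SimpleGraph V)

local prefix:100 "σ" => racgGen G
local prefix:100 "π" => CoxeterSystem.wordProd (racgCS G)
local prefix:100 "ℓ" => CoxeterSystem.length (racgCS G)

lemma exists_reduced_subword_aux :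
    ∀ (n : ℕ) (ω : List V), ω.length ≤ n →
      ∃ ω', (racgCS G).IsReduced ω' ∧ (∀ v ∈ ω', v ∈ ω) ∧ π ω' = π ω := by
  intro n
  induction n with
  | zero =>
    intro ω hlen
    have : ω = [] := List.eq_nil_of_length_eq_zero (Nat.le_zero.mp hlen)
    subst this
    exact ⟨[], by simp [CoxeterSystem.IsReduced], by simp, rfl⟩
  | succ n ih =>
    intro ω hlen
    by_cases hred : (racgCS G).IsReduced ω
    · exact ⟨ω, hred, fun v hv => hv, rfl⟩
    · classical
      have hex : ∃ m, ¬ (racgCS G).IsReduced (ω.take m) :=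
        ⟨ω.length, by rwa [List.take_length]⟩
      have hm : ¬ (racgCS G).IsReduced (ω.take (Nat.find hex)) := Nat.find_spec hex
      have hmle : Nat.find hex ≤ ω.length := Nat.find_le (by rwa [List.take_length])
      have hm0 : Nat.find hex ≠ 0 := by
        intro h0
        rw [h0] at hm
        exact hm (by simp [CoxeterSystem.IsReduced])
      obtain ⟨j, hjm⟩ : ∃ j, Nat.find hex = j + 1 :=
        ⟨Nat.find hex - 1, (Nat.succ_pred_eq_of_ne_zero hm0).symm⟩
      rw [hjm] at hm hmle
      have hj : j < ω.length := hmle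
      have hjred : (racgCS G).IsReduced (ω.take j) := by
        by_contra hc
        exact Nat.find_min hex (by omega) hc
      have htake : ω.take (j + 1) = ω.take j ++ [ω[j]] := by
        rw [List.take_succ, List.getElem?_eq_getElem hj]
        rfl
      set w := π (ω.take j) with hw_def
      set i := ω[j] with hi_def
      have hlenj : (ω.take j).length = j := by
        rw [List.length_take]
        omega
      have hlw : ℓ w = j := by rw [hw_def, hjred, hlenj]
      have hlt : ℓ (w * σ i) < ℓ w := by
        have hne : ℓ (w * σ i) ≠ j + 1 := by
          intro hc
          apply hm
          rw [htake]
          show ℓ (π (ω.take j ++ [i])) = (ω.take j ++ [i]).length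
          rw [wordProd_append, wordProd_singleton, racgCS_simple, ← hw_def, hc,
            List.length_append, hlenj]
          rfl
        rcases (racgCS G).length_mul_simple w i with h | h
        · rw [racgCS_simple] at h; omega
        · rw [racgCS_simple] at h; omega
      obtain ⟨k, hk, hke⟩ := right_exchange G hjred rfl hlt
      set χ := (ω.take j).eraseIdx k ++ ω.drop (j + 1) with hχ_def
      have hπχ : π χ = π ω := by
        conv_rhs => rw [← List.take_append_drop (j+1) ω]
        rw [hχ_def, wordProd_append, wordProd_append, hke, htake, wordProd_append,
          wordProd_singleton, racgCS_simple]
      have hχlen : χ.length ≤ n := by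
        rw [hχ_def, List.length_append, List.length_eraseIdx]
        rw [hlenj] at hk ⊢
        rw [if_pos hk, List.length_drop]
        omega
      obtain ⟨ω', hred', hsub', hπ'⟩ := ih χ hχlen
      refine ⟨ω', hred', ?_, by rw [hπ', hπχ]⟩
      intro v hv
      rcases List.mem_append.mp (hsub' v hv) with h | h
      · exact List.mem_of_mem_take (List.mem_of_mem_eraseIdx h)
      · exact List.mem_of_mem_drop h

lemma exists_reduced_subword (ω : List V) :
    ∃ ω', (racgCS G).IsReduced ω' ∧ (∀ v ∈ ω', v ∈ ω) ∧ π ω' = π ω :=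
  exists_reduced_subword_aux G ω.length ω le_rfl

lemma mem_special_iff (S : Set V) (x : RACG G) :
    x ∈ specialSubgroup G S ↔ ∃ ω : List V, (∀ v ∈ ω, v ∈ S) ∧ π ω = x := by
  constructor
  · intro hx
    refine Subgroup.closure_induction ?_ ?_ ?_ ?_ hx
    · rintro y ⟨v, hv, rfl⟩
      exact ⟨[v], by simpa using hv, by simp [wordProd_singleton]⟩
    · exact ⟨[], by simp, rfl⟩
    · rintro y y' - - ⟨ω₁, h₁, rfl⟩ ⟨ω₂, h₂, rfl⟩
      refine ⟨ω₁ ++ ω₂, ?_, by rw [wordProd_append]⟩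
      intro v hv
      rcases List.mem_append.mp hv with h | h
      exacts [h₁ v h, h₂ v h]
    · rintro y - ⟨ω, h, rfl⟩
      refine ⟨ω.reverse, fun v hv => h v (List.mem_reverse.mp hv), by rw [wordProd_reverse]⟩
  · rintro ⟨ω, hω, rfl⟩
    induction ω with
    | nil => exact one_mem _
    | cons v ω ih =>
      rw [wordProd_cons, racgCS_simple]
      exact mul_mem (Subgroup.subset_closure ⟨v, hω v (List.mem_cons_self), rfl⟩)
        (ih (fun u hu => hω u (List.mem_cons_of_mem v hu)))

lemma exists_reduced_word_over {S : Set V} {x : RACG G} (hx : x ∈ specialSubgroup G S) :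
    ∃ ω, (racgCS G).IsReduced ω ∧ (∀ v ∈ ω, v ∈ S) ∧ π ω = x := by
  obtain ⟨ω, hω, rfl⟩ := (mem_special_iff G S x).mp hx
  obtain ⟨ω', h1, h2, h3⟩ := exists_reduced_subword G ω
  exact ⟨ω', h1, fun v hv => hω v (h2 v hv), h3⟩

lemma length_one_mem_special {S : Set V} {x : RACG G} (hx : x ∈ specialSubgroup G S)
    (hl : ℓ x = 1) : ∃ v ∈ S, x = σ v := by
  obtain ⟨ω, hred, hsub, rfl⟩ := exists_reduced_word_over G hx
  have hlen : ω.length = 1 := by rw [← hred, hl]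
  obtain ⟨v, rfl⟩ := List.length_eq_one_iff.mp hlen
  exact ⟨v, hsub v (List.mem_singleton_self v), by rw [wordProd_singleton, racgCS_simple]⟩

lemma exists_splitting {S : Set V} {x : RACG G} (hx : x ∈ specialSubgroup G S)
    (hne : x ≠ 1) :
    ∃ v ∈ S, ∃ x' ∈ specialSubgroup G S, x = σ v * x' ∧ ℓ x' + 1 = ℓ x := by
  obtain ⟨ω, hred, hsub, rfl⟩ := exists_reduced_word_over G hx
  cases ω with
  | nil => exact absurd rfl hne
  | cons v ω =>
    have hredω : (racgCS G).IsReduced ω := by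
      have := CoxeterSystem.IsReduced.drop (ω := v :: ω) hred 1
      simpa using this
    refine ⟨v, hsub v (List.mem_cons_self), π ω, ?_, ?_, ?_⟩
    · exact (mem_special_iff G S _).mpr ⟨ω, fun u hu => hsub u (List.mem_cons_of_mem v hu), rfl⟩
    · rw [wordProd_cons, racgCS_simple]
    · rw [hredω, hred]
      simp

end RACGI

end ChunkD
section ChunkE

namespace RACGI

open CoxeterSystem List

variable {V : Type*} (G : SimpleGraph V)

local prefix:100 "σ" => racgGen G
local prefix:100 "π" => CoxeterSystem.wordProd (racgCS G)
local prefix:100 "ℓ" => CoxeterSystem.length (racgCS G)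

lemma gen_mem_special {S : Set V} {v : V} (hv : v ∈ S) : σ v ∈ specialSubgroup G S :=
  Subgroup.subset_closure ⟨v, hv, rfl⟩

variable {S : Set V} {g' : RACG G}

/-- If `g'` has minimal length in its double coset, left multiplication by elements of the
special subgroup adds lengths. -/
lemma min_left_add
    (hmin : ∀ a ∈ specialSubgroup G S, ∀ b ∈ specialSubgroup G S, ℓ g' ≤ ℓ (a * g' * b)) :
    ∀ (n : ℕ) (u : RACG G), u ∈ specialSubgroup G S → ℓ u ≤ n →
      ℓ (u * g') = ℓ u + ℓ g' := by
  intro n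
  induction n with
  | zero =>
    intro u hu hlen
    have : u = 1 := (racgCS G).length_eq_zero_iff.mp (Nat.le_zero.mp hlen)
    subst this
    simp
  | succ n ih =>
    intro u hu hlen
    by_cases hone : u = 1
    · subst hone; simp
    obtain ⟨v, hv, u', hu', huv, hlen'⟩ := exists_splitting G hu hone
    have ihu' : ℓ (u' * g') = ℓ u' + ℓ g' := ih u' hu' (by omega)
    have key : ℓ (σ v * (u' * g')) = ℓ (u' * g') + 1 := by
      rcases (racgCS G).length_simple_mul (u' * g') v with h | h
      · rwa [racgCS_simple] at h
      · rw [racgCS_simple] at h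
        exfalso
        -- descent: apply left exchange
        obtain ⟨ωu, hωured, hωusub, hωu⟩ := exists_reduced_word_over G hu'
        obtain ⟨ωg, hωgred, hωg⟩ := (racgCS G).exists_reduced_word' g'
        have hlu' : ℓ u' = ωu.length := by rw [← hωu]; exact hωured
        have hlg' : ℓ g' = ωg.length := by rw [hωg]; exact hωgred
        have hωred : (racgCS G).IsReduced (ωu ++ ωg) := by
          show ℓ (π (ωu ++ ωg)) = _
          rw [wordProd_append, hωu, ← hωg, ihu', List.length_append]
          omega
        have hπ : π (ωu ++ ωg) = u' * g' := by
          rw [wordProd_append, hωu, ← hωg]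
        obtain ⟨j, hj, hje⟩ := left_exchange G hωred hπ
          (show ℓ (σ v * (u' * g')) < ℓ (u' * g') by omega)
        rw [List.length_append] at hj
        by_cases hcase : j < ωu.length
        · rw [List.eraseIdx_append_of_lt_length hcase, wordProd_append, ← hωg] at hje
          have hcancel : π (ωu.eraseIdx j) = σ v * u' := by
            have := mul_right_cancel (hje.trans (by rw [mul_assoc]))
            exact this
          have h1 : ℓ (σ v * u') ≤ (ωu.eraseIdx j).length := by
            rw [← hcancel]; exact (racgCS G).length_wordProd_le _
          rw [List.length_eraseIdx, if_pos hcase] at h1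
          rw [← huv] at h1
          omega
        · push_neg at hcase
          rw [List.eraseIdx_append_of_length_le hcase, wordProd_append, hωu] at hje
          have hcancel : π (ωg.eraseIdx (j - ωu.length)) = u'⁻¹ * (σ v * (u' * g')) := by
            rw [← hje]; group
          have hmem : u'⁻¹ * σ v * u' ∈ specialSubgroup G S :=
            mul_mem (mul_mem (inv_mem hu') (gen_mem_special G hv)) hu'
          have hminapp := hmin _ hmem 1 (one_mem _)
          have heq : u'⁻¹ * σ v * u' * g' * 1 = π (ωg.eraseIdx (j - ωu.length)) := by
            rw [hcancel]; group
          have h1 : ℓ (u'⁻¹ * σ v * u' * g' * 1) ≤ (ωg.eraseIdx (j - ωu.length)).length := by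
            rw [heq]; exact (racgCS G).length_wordProd_le _
          rw [List.length_eraseIdx, if_pos (by omega)] at h1
          omega
    calc ℓ (u * g') = ℓ (σ v * (u' * g')) := by rw [huv, mul_assoc]
    _ = ℓ (u' * g') + 1 := key
    _ = ℓ u + ℓ g' := by omega

lemma min_right_add
    (hmin : ∀ a ∈ specialSubgroup G S, ∀ b ∈ specialSubgroup G S, ℓ g' ≤ ℓ (a * g' * b)) :
    ∀ b ∈ specialSubgroup G S, ℓ (g' * b) = ℓ g' + ℓ b := by
  intro b hb
  have hmin' : ∀ a ∈ specialSubgroup G S, ∀ c ∈ specialSubgroup G S,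
      ℓ g'⁻¹ ≤ ℓ (a * g'⁻¹ * c) := by
    intro a ha c hc
    have h1 : ℓ (a * g'⁻¹ * c) = ℓ (c⁻¹ * g' * a⁻¹) := by
      rw [← (racgCS G).length_inv (c⁻¹ * g' * a⁻¹)]
      congr 1
      group
    rw [(racgCS G).length_inv, h1]
    exact hmin c⁻¹ (inv_mem hc) a⁻¹ (inv_mem ha)
  have h2 : ℓ (g' * b) = ℓ (b⁻¹ * g'⁻¹) := by
    rw [← (racgCS G).length_inv (b⁻¹ * g'⁻¹)]
    congr 1
    group
  rw [h2, min_left_add G hmin' (ℓ b⁻¹) b⁻¹ (inv_mem hb) le_rfl,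
    (racgCS G).length_inv, (racgCS G).length_inv]
  omega

/-- The core of Kilmoyer's theorem: the hard inclusion. -/
lemma kilmoyer_hard
    (hmin : ∀ a ∈ specialSubgroup G S, ∀ b ∈ specialSubgroup G S, ℓ g' ≤ ℓ (a * g' * b)) :
    ∀ (n : ℕ) (x : RACG G), x ∈ specialSubgroup G S →
      g'⁻¹ * x * g' ∈ specialSubgroup G S → ℓ x ≤ n →
      x ∈ specialSubgroup G {v | v ∈ S ∧ g'⁻¹ * σ v * g' ∈ specialSubgroup G S} := by
  intro n
  induction n with
  | zero =>
    intro x hx hy hlen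
    have : x = 1 := (racgCS G).length_eq_zero_iff.mp (Nat.le_zero.mp hlen)
    subst this
    exact one_mem _
  | succ n ih =>
    intro x hx hy hlen
    by_cases hone : x = 1
    · subst hone; exact one_mem _
    obtain ⟨v, hv, x', hx', hxv, hlen'⟩ := exists_splitting G hx hone
    set y := g'⁻¹ * x * g' with hy_def
    have hgy : g' * y = x * g' := by rw [hy_def]; group
    have hlgy : ℓ (g' * y) = ℓ g' + ℓ y := min_right_add G hmin y hy
    have hlxg : ℓ (x * g') = ℓ x + ℓ g' :=
      min_left_add G hmin (ℓ x) x hx le_rfl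
    have hlx'g : ℓ (x' * g') = ℓ x' + ℓ g' :=
      min_left_add G hmin (ℓ x') x' hx' le_rfl
    have hd : ℓ (σ v * (g' * y)) < ℓ (g' * y) := by
      have h1 : σ v * (g' * y) = x' * g' := by
        rw [hgy, hxv]
        calc σ v * (σ v * x' * g') = (σ v * σ v) * x' * g' := by group
        _ = x' * g' := by rw [racgGen_sq]; group
      have h2 : ℓ g' + ℓ y = ℓ x + ℓ g' := by rw [← hlgy, hgy, hlxg]
      rw [h1, hlx'g, hlgy]
      omega
    obtain ⟨ωg, hωgred, hωg⟩ := (racgCS G).exists_reduced_word' g'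
    obtain ⟨ωy, hωyred, hωysub, hωy⟩ := exists_reduced_word_over G hy
    have hπ : π (ωg ++ ωy) = g' * y := by rw [wordProd_append, ← hωg, hωy]
    have hgl : ωg.length = ℓ g' := by rw [← hωgred, ← hωg]
    have hyl : ωy.length = ℓ y := by rw [← hωyred, hωy]
    have hωred : (racgCS G).IsReduced (ωg ++ ωy) := by
      show ℓ (π (ωg ++ ωy)) = _
      rw [hπ, hlgy, List.length_append]
      omega
    obtain ⟨j, hj, hje⟩ := left_exchange G hωred hπ hd
    rw [List.length_append] at hj
    by_cases hcase : j < ωg.length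
    · exfalso
      rw [List.eraseIdx_append_of_lt_length hcase, wordProd_append, hωy] at hje
      have hcancel : π (ωg.eraseIdx j) = σ v * g' := by
        have := mul_right_cancel (hje.trans (by rw [mul_assoc, hgy, ← mul_assoc]))
        exact this
      have h1 : ℓ (σ v * g') ≤ (ωg.eraseIdx j).length := by
        rw [← hcancel]; exact (racgCS G).length_wordProd_le _
      rw [List.length_eraseIdx, if_pos hcase] at h1
      have h2 := hmin (σ v) (gen_mem_special G hv) 1 (one_mem _)
      rw [mul_one] at h2
      omega
    · push_neg at hcase
      rw [List.eraseIdx_append_of_length_le hcase, wordProd_append, ← hωg] at hje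
      set k := j - ωg.length with hk_def
      have hcancel : π (ωy.eraseIdx k) = g'⁻¹ * (σ v * (g' * y)) := by
        rw [← hje]; group
      set z := π (ωy.eraseIdx k) * y⁻¹ with hz_def
      have hzmem : z ∈ specialSubgroup G S := by
        refine mul_mem ?_ (inv_mem hy)
        refine (mem_special_iff G S _).mpr ⟨ωy.eraseIdx k, ?_, rfl⟩
        intro u hu
        exact hωysub u (List.mem_of_mem_eraseIdx hu)
      have hzconj : g'⁻¹ * σ v * g' = z := by
        rw [hz_def, hcancel]; group
      have hvmem : v ∈ {v | v ∈ S ∧ g'⁻¹ * σ v * g' ∈ specialSubgroup G S} := by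
        refine ⟨hv, ?_⟩
        rw [hzconj]; exact hzmem
      have hx'y : g'⁻¹ * x' * g' ∈ specialSubgroup G S := by
        have hx'eq : x' = σ v * x := by
          have h9 : σ v * (σ v * x') = x' := by
            calc σ v * (σ v * x') = (σ v * σ v) * x' := by group
            _ = x' := by rw [racgGen_sq]; group
          rw [hxv, h9]
        have : g'⁻¹ * x' * g' = (g'⁻¹ * σ v * g') * (g'⁻¹ * x * g') := by
          rw [hx'eq]; group
        rw [this, hzconj]
        exact mul_mem hzmem hy
      have hx'mem := ih x' hx' hx'y (by omega)
      rw [hxv]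
      exact mul_mem (gen_mem_special G hvmem) hx'mem

end RACGI

end ChunkE
section ChunkF

namespace RACGI

open CoxeterSystem List

variable {V : Type*} (G : SimpleGraph V)

local prefix:100 "σ" => racgGen G
local prefix:100 "ℓ" => CoxeterSystem.length (racgCS G)

lemma kilmoyer_easy {S : Set V} {g' : RACG G} {x : RACG G}
    (hx : x ∈ specialSubgroup G {v | v ∈ S ∧ g'⁻¹ * σ v * g' ∈ specialSubgroup G S}) :
    x ∈ specialSubgroup G S ∧ g'⁻¹ * x * g' ∈ specialSubgroup G S := by
  constructor
  · refine Subgroup.closure_mono ?_ hx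
    exact Set.image_mono (fun v hv => hv.1)
  · refine Subgroup.closure_induction ?_ ?_ ?_ ?_ hx
    · rintro y ⟨v, ⟨hvS, hvconj⟩, rfl⟩
      exact hvconj
    · simpa using one_mem (specialSubgroup G S)
    · intro y y' _ _ hy hy'
      have h : g'⁻¹ * (y * y') * g' = (g'⁻¹ * y * g') * (g'⁻¹ * y' * g') := by group
      rw [h]
      exact mul_mem hy hy'
    · intro y _ hy
      have h : g'⁻¹ * y⁻¹ * g' = (g'⁻¹ * y * g')⁻¹ := by group
      rw [h]
      exact inv_mem hy

lemma mem_conj_map (h x : RACG G) (K : Subgroup (RACG G)) :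
    x ∈ Subgroup.map (MulAut.conj h).toMonoidHom K ↔ h⁻¹ * x * h ∈ K := by
  rw [Subgroup.mem_map]
  constructor
  · rintro ⟨y, hy, rfl⟩
    have : h⁻¹ * ((MulAut.conj h).toMonoidHom y) * h = y := by
      simp only [MulEquiv.coe_toMonoidHom, MulAut.conj_apply]
      group
    rwa [this]
  · intro hy
    refine ⟨h⁻¹ * x * h, hy, ?_⟩
    simp only [MulEquiv.coe_toMonoidHom, MulAut.conj_apply]
    group

end RACGI

end ChunkF


/-- Intersections of a special subgroup with its conjugates are conjugates of special
subgroups (Proposition 3.4 of Antolín–Minasyan). -/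
theorem racg_intersection_conjugate_special
    {V : Type*} [Fintype V] (G : SimpleGraph V) (Γ₁ : Set V) (g : RACG G) :
    ∃ Γ₂ : Set V, Γ₂ ⊆ Γ₁ ∧ ∃ h ∈ specialSubgroup G Γ₁,
      specialSubgroup G Γ₁ ⊓
          Subgroup.map (MulAut.conj g).toMonoidHom (specialSubgroup G Γ₁)
        = Subgroup.map (MulAut.conj h).toMonoidHom (specialSubgroup G Γ₂) := by
  
  classical
  obtain ⟨a, ha, b, hb, hab⟩ :=
    Nat.sInf_mem (s := {n | ∃ a ∈ specialSubgroup G Γ₁, ∃ b ∈ specialSubgroup G Γ₁,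
      (RACGI.racgCS G).length (a * g * b) = n})
      ⟨(RACGI.racgCS G).length (1 * g * 1), 1, one_mem _, 1, one_mem _, rfl⟩
  have hmin : ∀ a' ∈ specialSubgroup G Γ₁, ∀ b' ∈ specialSubgroup G Γ₁,
      (RACGI.racgCS G).length (a * g * b) ≤ (RACGI.racgCS G).length (a' * (a * g * b) * b') := by
    intro a' ha' b' hb'
    rw [hab]
    refine Nat.sInf_le ⟨a' * a, mul_mem ha' ha, b * b', mul_mem hb hb', ?_⟩
    congr 1
    group
  refine ⟨{v | v ∈ Γ₁ ∧ (a * g * b)⁻¹ * racgGen G v * (a * g * b) ∈ specialSubgroup G Γ₁},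
    fun v hv => hv.1, a⁻¹, inv_mem ha, ?_⟩
  ext x
  rw [Subgroup.mem_inf, RACGI.mem_conj_map, RACGI.mem_conj_map, inv_inv]
  constructor
  · rintro ⟨hx1, hx2⟩
    refine RACGI.kilmoyer_hard G hmin ((RACGI.racgCS G).length (a * x * a⁻¹)) _
      (mul_mem (mul_mem ha hx1) (inv_mem ha)) ?_ le_rfl
    have heq : (a * g * b)⁻¹ * (a * x * a⁻¹) * (a * g * b)
        = b⁻¹ * (g⁻¹ * x * g) * b := by group
    rw [heq]
    exact mul_mem (mul_mem (inv_mem hb) hx2) hb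
  · intro hx2
    obtain ⟨h1, h2⟩ := RACGI.kilmoyer_easy G hx2
    constructor
    · have heq : x = a⁻¹ * (a * x * a⁻¹) * a := by group
      rw [heq]
      exact mul_mem (mul_mem (inv_mem ha) h1) ha
    · have heq : g⁻¹ * x * g
          = b * ((a * g * b)⁻¹ * (a * x * a⁻¹) * (a * g * b)) * b⁻¹ := by group
      rw [heq]
      exact mul_mem (mul_mem hb h2) (inv_mem hb)
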